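/- (Pseudorandom measures are close to 1 in Gowers norm.) For every integer k ≥ 3 and every ε' > 0 there exist ε > 0 and N₀ such that: for every prime N ≥ N₀ and every ν : ZMod N → ℝ with ν ≥ 0 satisfying the (2^{k−1}, k, 1)-linear forms condition with error ε, one has ‖ν − 1‖_{U^d} ≤ ε' for every integer 1 ≤ d ≤ k−1. -/

import Mathlib

open Finset

/-- The average of `f` over `ZMod N`. -/
noncomputable def avgZ (N : ℕ) [NeZero N] (f : ZMod N → ℝ) : ℝ :=
  (∑ x : ZMod N, f x) / (N : ℝ)

/-- The Gowers inner product of a `{0,1}^d`-tuple of functions on `ZMod N`. -/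
noncomputable def gowersInner (N : ℕ) [NeZero N] (d : ℕ)
    (f : (Fin d → Bool) → ZMod N → ℝ) : ℝ :=
  (∑ x : ZMod N, ∑ h : Fin d → ZMod N,
    ∏ ω : Fin d → Bool, f ω (x + ∑ i : Fin d, if ω i then h i else 0)) / (N : ℝ) ^ (d + 1)

/-- The Gowers uniformity norm `‖f‖_{U^d}`. -/
noncomputable def gowersNorm (N : ℕ) [NeZero N] (d : ℕ) (f : ZMod N → ℝ) : ℝ :=
  (gowersInner N d fun _ => f) ^ ((1 : ℝ) / 2 ^ d)

/-- The `(m₀,t₀,L₀)`-linear forms condition with error `ε`. -/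
def LinearFormsCondition (N : ℕ) [Fact (Nat.Prime N)] (ν : ZMod N → ℝ)
    (m₀ t₀ L₀ : ℕ) (ε : ℝ) : Prop :=
  ∀ (m t : ℕ), 1 ≤ m → m ≤ m₀ → 1 ≤ t → t ≤ t₀ →
    ∀ (L : Fin m → Fin t → ℚ) (b : Fin m → ZMod N),
      (∀ i j, (L i j).num.natAbs ≤ L₀ ∧ (L i j).den ≤ L₀) →
      (∀ i, L i ≠ 0) →
      (∀ i i', i ≠ i' → ¬ ∃ q : ℚ, L i = q • L i') →
      |(∑ x : Fin t → ZMod N, ∏ i : Fin m,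
          ν (∑ j : Fin t, (L i j : ZMod N) * x j + b i)) / (N : ℝ) ^ t - 1| ≤ ε

/-- The `m₀`-correlation condition with moment bounds `M`. -/
def CorrelationCondition (N : ℕ) [NeZero N] (ν : ZMod N → ℝ) (m₀ : ℕ) (M : ℕ → ℝ) : Prop :=
  ∀ m : ℕ, 1 < m → m ≤ m₀ →
    ∃ τ : ZMod N → ℝ, (∀ x, 0 ≤ τ x) ∧
      (∀ q : ℕ, 1 ≤ q → avgZ N (fun x => τ x ^ q) ≤ M q) ∧
      ∀ h : Fin m → ZMod N,
        avgZ N (fun x => ∏ i : Fin m, ν (x + h i)) ≤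
          ∑ i : Fin m, ∑ j : Fin m, if i < j then τ (h i - h j) else 0

/-- `ν` is `k`-pseudorandom with error `ε` and moment bounds `M`. -/
def Pseudorandom (N : ℕ) [Fact (Nat.Prime N)] (k : ℕ) (ν : ZMod N → ℝ)
    (ε : ℝ) (M : ℕ → ℝ) : Prop :=
  (∀ x, 0 ≤ ν x) ∧
  LinearFormsCondition N ν (k * 2 ^ (k - 1)) (3 * k - 4) k ε ∧
  CorrelationCondition N ν (2 ^ (k - 1)) M

/-- The dual function `DF` of `F` (with parameter `k`; uses the `U^{k-1}` box). -/
noncomputable def dualFn (N : ℕ) [NeZero N] (k : ℕ) (F : ZMod N → ℝ) (x : ZMod N) : ℝ :=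
  (∑ h : Fin (k - 1) → ZMod N,
    ∏ ω ∈ Finset.univ.filter (fun ω : Fin (k - 1) → Bool => ω ≠ fun _ => false),
      F (x + ∑ i : Fin (k - 1), if ω i then h i else 0)) / (N : ℝ) ^ (k - 1)

/-- The dual norm `‖g‖_{(U^{k-1})^*}`. -/
noncomputable def dualNorm (N : ℕ) [NeZero N] (k : ℕ) (g : ZMod N → ℝ) : ℝ :=
  sSup {r : ℝ | ∃ f : ZMod N → ℝ, gowersNorm N (k - 1) f ≤ 1 ∧
    r = |avgZ N (fun x => f x * g x)|}

lemma term_close (k : ℕ) (hk : 3 ≤ k) (N : ℕ) [Fact (Nat.Prime N)] (ν : ZMod N → ℝ)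
    (ε : ℝ) (hLF : LinearFormsCondition N ν (2 ^ (k - 1)) k 1 ε)
    (d : ℕ) (hd : d ≤ k - 1) (S : Finset (Fin d → Bool)) (hS : S.Nonempty) :
    |(∑ x : ZMod N, ∑ h : Fin d → ZMod N,
        ∏ ω ∈ S, ν (x + ∑ i : Fin d, if ω i then h i else 0)) / (N:ℝ)^(d+1) - 1| ≤ ε := by
  classical
  set e := S.equivFin with he
  set L : Fin S.card → Fin (d+1) → ℚ :=
    fun i => Fin.cons 1 (fun j => if (e.symm i : Fin d → Bool) j then 1 else 0) with hL
  have hm1 : 1 ≤ S.card := hS.card_pos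
  have hm2 : S.card ≤ 2 ^ (k-1) := by
    have h1 : S.card ≤ Fintype.card (Fin d → Bool) := S.card_le_univ
    have h2 : Fintype.card (Fin d → Bool) = 2 ^ d := by
      simp [Fintype.card_fun]
    have : (2:ℕ)^d ≤ 2^(k-1) := Nat.pow_le_pow_right (by norm_num) hd
    omega
  have key := hLF S.card (d+1) hm1 hm2 (by omega) (by omega) L 0
    (by
      intro i j
      refine Fin.cases ?_ ?_ j
      · simp [hL]
      · intro j'
        simp only [hL, Fin.cons_succ]
        split <;> simp)
    (by
      intro i hcontra
      have := congrFun hcontra 0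
      simp [hL] at this)
    (by
      rintro i i' hne ⟨q, hq⟩
      have h0 := congrFun hq 0
      simp [hL, Pi.smul_apply, smul_eq_mul] at h0
      subst h0
      apply hne
      apply e.symm.injective
      apply Subtype.ext
      funext j
      have hj := congrFun hq j.succ
      simp [hL, Pi.smul_apply, smul_eq_mul, Fin.cons_succ] at hj
      cases hb : (e.symm i : Fin d → Bool) j <;> cases hb' : (e.symm i' : Fin d → Bool) j <;>
        simp_all)
  have hsum : (∑ x : Fin (d+1) → ZMod N, ∏ i : Fin S.card,
        ν (∑ j : Fin (d+1), ((L i j : ZMod N)) * x j + (0 : Fin S.card → ZMod N) i))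
      = ∑ x : ZMod N, ∑ h : Fin d → ZMod N,
          ∏ ω ∈ S, ν (x + ∑ i : Fin d, if ω i then h i else 0) := by
    rw [← Equiv.sum_comp (Fin.consEquiv (fun _ : Fin (d+1) => ZMod N))]
    rw [Fintype.sum_prod_type]
    refine Finset.sum_congr rfl fun x _ => Finset.sum_congr rfl fun h _ => ?_
    rw [← Finset.prod_coe_sort S, ← Equiv.prod_comp e.symm]
    refine Finset.prod_congr rfl fun i _ => ?_
    congr 1
    simp only [Pi.zero_apply, add_zero, Fin.consEquiv_apply]
    rw [Fin.sum_univ_succ]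
    simp only [hL, Fin.cons_zero, Fin.cons_succ, Rat.cast_one, one_mul]
    congr 1
    refine Finset.sum_congr rfl fun j _ => ?_
    split <;> simp
  rw [hsum] at key
  exact key

lemma expand_inner (N : ℕ) [NeZero N] (d : ℕ) (ν : ZMod N → ℝ) :
    gowersInner N d (fun _ => fun x => ν x - 1)
      = ∑ S ∈ (univ : Finset (Fin d → Bool)).powerset,
          (-1:ℝ)^(2^d - S.card) *
          ((∑ x : ZMod N, ∑ h : Fin d → ZMod N,
            ∏ ω ∈ S, ν (x + ∑ i : Fin d, if ω i then h i else 0)) / (N:ℝ)^(d+1)) := by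
  unfold gowersInner
  have step : ∀ (x : ZMod N) (h : Fin d → ZMod N),
      (∏ ω : Fin d → Bool, (ν (x + ∑ i : Fin d, if ω i then h i else 0) - 1))
        = ∑ S ∈ (univ : Finset (Fin d → Bool)).powerset,
            (∏ ω ∈ S, ν (x + ∑ i : Fin d, if ω i then h i else 0)) * (-1:ℝ)^(2^d - S.card) := by
    intro x h
    simp only [sub_eq_add_neg]
    rw [Finset.prod_add]
    refine Finset.sum_congr rfl fun S hS => ?_
    rw [Finset.prod_const]
    congr 1
    rw [Finset.card_sdiff_of_subset (Finset.mem_powerset.mp hS), Finset.card_univ]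
    simp [Fintype.card_fun]
  simp only [step]
  have h1 : ∀ x : ZMod N, (∑ h : Fin d → ZMod N, ∑ S ∈ (univ : Finset (Fin d → Bool)).powerset,
        (∏ ω ∈ S, ν (x + ∑ i : Fin d, if ω i then h i else 0)) * (-1:ℝ)^(2^d - S.card))
      = ∑ S ∈ (univ : Finset (Fin d → Bool)).powerset, ∑ h : Fin d → ZMod N,
        (∏ ω ∈ S, ν (x + ∑ i : Fin d, if ω i then h i else 0)) * (-1:ℝ)^(2^d - S.card) :=
    fun x => Finset.sum_comm
  simp only [h1]
  rw [Finset.sum_comm (s := (univ : Finset (ZMod N)))]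
  rw [Finset.sum_div]
  refine Finset.sum_congr rfl fun S _ => ?_
  simp only [← Finset.sum_mul]
  ring

lemma sum_signs_zero (d : ℕ) :
    ∑ S ∈ (univ : Finset (Fin d → Bool)).powerset, (-1:ℝ)^(2^d - S.card) = 0 := by
  have h0 := Finset.prod_add (fun _ : Fin d → Bool => (1:ℝ)) (fun _ => (-1:ℝ)) univ
  have hl : (∏ _ω : Fin d → Bool, ((1:ℝ) + (-1))) = 0 := by
    rw [Finset.prod_const]
    norm_num
  rw [hl] at h0
  rw [h0]
  refine (Finset.sum_congr rfl fun S hS => ?_).symm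
  rw [Finset.prod_const_one, one_mul, Finset.prod_const,
    Finset.card_sdiff_of_subset (Finset.mem_powerset.mp hS), Finset.card_univ]
  simp [Fintype.card_fun]

/-- A pseudorandom measure is close to the constant `1` in every `U^d` norm,
`1 ≤ d ≤ k - 1`. -/
theorem pseudorandom_close_to_one_in_gowers_norm (k : ℕ) (hk : 3 ≤ k)
    (ε' : ℝ) (hε' : 0 < ε') :
    ∃ ε : ℝ, 0 < ε ∧ ∃ N₀ : ℕ,
      ∀ (N : ℕ) [Fact (Nat.Prime N)], N₀ ≤ N →
        ∀ ν : ZMod N → ℝ, (∀ x, 0 ≤ ν x) →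
          LinearFormsCondition N ν (2 ^ (k - 1)) k 1 ε →
          ∀ d : ℕ, 1 ≤ d → d ≤ k - 1 →
            gowersNorm N d (fun x => ν x - 1) ≤ ε' := by
  classical
  set δ := min (ε'/2) 1 with hδdef
  have hδpos : 0 < δ := lt_min (by linarith) one_pos
  have hδ1 : δ ≤ 1 := min_le_right _ _
  refine ⟨δ ^ (2^(k-1)), by positivity, 0, ?_⟩
  intro N instN _ ν hν hLF d hd1 hd2
  set ε := δ ^ (2^(k-1)) with hεdef
  have hεpos : 0 < ε := by positivity
  have hterm : ∀ S ∈ (univ : Finset (Fin d → Bool)).powerset,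
      |(∑ x : ZMod N, ∑ h : Fin d → ZMod N,
        ∏ ω ∈ S, ν (x + ∑ i : Fin d, if ω i then h i else 0)) / (N:ℝ)^(d+1) - 1| ≤ ε := by
    intro S _
    rcases S.eq_empty_or_nonempty with rfl | hS
    · have hNpos : (0:ℝ) < N := by
        have := (Fact.out : N.Prime).pos
        exact_mod_cast this
      have : (∑ x : ZMod N, ∑ _h : Fin d → ZMod N, (1:ℝ)) = (N:ℝ)^(d+1) := by
        simp [Finset.sum_const, Finset.card_univ, ZMod.card, Fintype.card_fun]
        ring
      simp only [Finset.prod_empty, this, div_self (by positivity : ((N:ℝ)^(d+1)) ≠ 0)]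
      simpa using hεpos.le
    · exact term_close k hk N ν ε hLF d hd2 S hS
  have key : |gowersInner N d (fun _ => fun x => ν x - 1)| ≤ 2^(2^d) * ε := by
    rw [expand_inner]
    set P := (univ : Finset (Fin d → Bool)).powerset with hP
    set a : Finset (Fin d → Bool) → ℝ := fun S =>
      (∑ x : ZMod N, ∑ h : Fin d → ZMod N,
        ∏ ω ∈ S, ν (x + ∑ i : Fin d, if ω i then h i else 0)) / (N:ℝ)^(d+1) with ha
    have hrw : ∑ S ∈ P, (-1:ℝ)^(2^d - S.card) * a S
        = ∑ S ∈ P, (-1:ℝ)^(2^d - S.card) * (a S - 1) := by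
      simp only [mul_sub, mul_one, Finset.sum_sub_distrib]
      rw [hP, sum_signs_zero, sub_zero]
    rw [hrw]
    calc |∑ S ∈ P, (-1:ℝ)^(2^d - S.card) * (a S - 1)|
        ≤ ∑ S ∈ P, |(-1:ℝ)^(2^d - S.card) * (a S - 1)| := Finset.abs_sum_le_sum_abs _ _
      _ ≤ ∑ S ∈ P, ε := by
          refine Finset.sum_le_sum fun S hS => ?_
          rw [abs_mul, abs_pow, abs_neg, abs_one, one_pow, one_mul]
          exact hterm S hS
      _ = 2^(2^d) * ε := by
          rw [Finset.sum_const, nsmul_eq_mul]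
          congr 1
          rw [hP, Finset.card_powerset, Finset.card_univ]
          simp [Fintype.card_fun]
  have h2d : (0:ℝ) < 2^d := by positivity
  unfold gowersNorm
  calc (gowersInner N d fun _ => fun x => ν x - 1) ^ ((1:ℝ)/2^d)
      ≤ |(gowersInner N d fun _ => fun x => ν x - 1) ^ ((1:ℝ)/2^d)| := le_abs_self _
    _ ≤ |gowersInner N d fun _ => fun x => ν x - 1| ^ ((1:ℝ)/2^d) :=
        Real.abs_rpow_le_abs_rpow _ _
    _ ≤ ((2:ℝ)^(2^d) * ε) ^ ((1:ℝ)/2^d) :=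
        Real.rpow_le_rpow (abs_nonneg _) key (by positivity)
    _ = ((2:ℝ)^(2^d)) ^ ((1:ℝ)/2^d) * ε ^ ((1:ℝ)/2^d) :=
        Real.mul_rpow (by positivity) hεpos.le
    _ = 2 * δ ^ (2^(k-1-d)) := by
        congr 1
        · rw [← Real.rpow_natCast 2 (2^d), ← Real.rpow_mul (by norm_num : (0:ℝ) ≤ 2)]
          rw [mul_one_div]
          rw [show ((2^d : ℕ) : ℝ) / (2:ℝ)^d = 1 by
            rw [div_eq_one_iff_eq (ne_of_gt h2d)]; push_cast; ring]
          exact Real.rpow_one 2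
        · rw [hεdef, ← Real.rpow_natCast δ (2^(k-1)), ← Real.rpow_mul hδpos.le,
            ← Real.rpow_natCast δ (2^(k-1-d))]
          congr 1
          rw [mul_one_div, div_eq_iff (ne_of_gt h2d)]
          push_cast
          rw [← pow_add]
          congr 1
          omega
    _ ≤ 2 * δ := by
        have hne : 2^(k-1-d) ≠ 0 := (Nat.pow_pos (by norm_num : 0 < 2) : 0 < 2^(k-1-d)).ne'
        have := pow_le_of_le_one hδpos.le hδ1 hne
        linarith
    _ ≤ ε' := by
        have : δ ≤ ε'/2 := min_le_left _ _
        linarith
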